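/- Let K ⊇ F be a differential extension with the same constants as F, and let 𝓘 be a set of locally iterated Picard–Vessiot subextensions of F inside K. Then the compositum of the fields in 𝓘 is a locally iterated Picard–Vessiot extension of F. -/

import Mathlib

/-- A derivation on a field, given as a bare function. -/
structure IsDeriv {K : Type*} [Field K] (d : K → K) : Prop where
  map_add : ∀ a b : K, d (a + b) = d a + d b
  leibniz : ∀ a b : K, d (a * b) = a * d b + d a * b

variable {K : Type*} [Field K]

/-- A subfield is a differential subfield if it is stable under the derivation. -/
def DStable (d : K → K) (E : Subfield K) : Prop := ∀ x ∈ E, d x ∈ E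

/-- `y` is a solution of the monic linear homogeneous ODE
`Y⁽ⁿ⁾ + a_{n-1} Y⁽ⁿ⁻¹⁾ + ⋯ + a_0 Y = 0`. -/
def IsSol (d : K → K) {n : ℕ} (a : Fin n → K) (y : K) : Prop :=
  d^[n] y + ∑ i : Fin n, a i * d^[(i : ℕ)] y = 0

/-- The family `v` is linearly independent over the constants. -/
def LinIndepConst (d : K → K) {n : ℕ} (v : Fin n → K) : Prop :=
  ∀ c : Fin n → K, (∀ i, d (c i) = 0) → ∑ i, c i * v i = 0 → ∀ i, c i = 0

/-- The ODE with coefficients `a` has a full set of solutions inside `T`. -/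
def FullSolutionsIn (d : K → K) {n : ℕ} (a : Fin n → K) (T : Set K) : Prop :=
  ∃ v : Fin n → K, (∀ i, v i ∈ T) ∧ (∀ i, IsSol d a (v i)) ∧ LinIndepConst d v

/-- The (differential) subfield generated by a set: the subfield generated by the
set together with all of its iterated derivatives. -/
def DiffGen (d : K → K) (A : Set K) : Subfield K :=
  Subfield.closure (⋃ k, d^[k] '' A)

/-- `M` is a Picard–Vessiot extension of `E` (for some monic linear operator `L`):
no new constants, and `M` is generated over `E` by a full set of solutions of `L`. -/
def IsPV (d : K → K) (E M : Subfield K) : Prop :=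
  E ≤ M ∧ (∀ x ∈ M, d x = 0 → x ∈ E) ∧
  ∃ (n : ℕ) (a v : Fin n → K), (∀ i, a i ∈ E) ∧ (∀ i, v i ∈ M) ∧
    (∀ i, IsSol d a (v i)) ∧ LinIndepConst d v ∧
    M ≤ DiffGen d (↑E ∪ Set.range v)

/-- `E` is an iterated Picard–Vessiot extension of `F`: there is a finite defining
tower of Picard–Vessiot steps from `F` to `E`. -/
def IsIPV (d : K → K) (F E : Subfield K) : Prop :=
  ∃ (n : ℕ) (T : Fin (n + 1) → Subfield K), T 0 = F ∧ T (Fin.last n) = E ∧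
    ∀ i : Fin n, IsPV d (T i.castSucc) (T i.succ)

/-- `E` is a locally iterated Picard–Vessiot extension of `F`: every finite subset
of `E` lies in an iterated Picard–Vessiot subextension. -/
def IsLIPV (d : K → K) (F E : Subfield K) : Prop :=
  F ≤ E ∧ ∀ X : Finset K, ↑X ⊆ (E : Set K) → ∃ M : Subfield K,
    M ≤ E ∧ IsIPV d F M ∧ ↑X ⊆ (M : Set K)

/-- `E₁` is a Picard–Vessiot closure of `E`: a no-new-constants extension in which every
linear homogeneous ODE over `E` has a full set of solutions, generated by such solutions. -/
def IsPVClosure (d : K → K) (E E₁ : Subfield K) : Prop :=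
  E ≤ E₁ ∧ (∀ x ∈ E₁, d x = 0 → x ∈ E) ∧
  (∀ (n : ℕ) (a : Fin n → K), (∀ i, a i ∈ E) → FullSolutionsIn d a E₁) ∧
  E₁ ≤ DiffGen d (↑E ∪ {y | y ∈ E₁ ∧ ∃ (n : ℕ) (a : Fin n → K), (∀ i, a i ∈ E) ∧ IsSol d a y})

/-- A tower of iterated Picard–Vessiot closures `F = F₀ ⊆ F₁ ⊆ F₂ ⊆ ⋯`. -/
def IsPVTower (d : K → K) (Fi : ℕ → Subfield K) : Prop :=
  ∀ i, IsPVClosure d (Fi i) (Fi (i + 1))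

/-- The field of constants is algebraically closed. -/
def ConstAlgClosed (d : K → K) : Prop :=
  ∀ p : Polynomial K, 0 < p.degree → (∀ n, d (p.coeff n) = 0) → ∃ x, d x = 0 ∧ p.eval x = 0

/-- `σ` is a differential automorphism over `F`. -/
def IsDiffAutOver (d : K → K) (F : Subfield K) (σ : K ≃+* K) : Prop :=
  (∀ x, σ (d x) = d (σ x)) ∧ ∀ x ∈ F, σ x = x

section Aux

variable {d : K → K}

lemma diffGen_mono (d : K → K) {A B : Set K} (h : A ⊆ B) : DiffGen d A ≤ DiffGen d B :=
  Subfield.closure_mono (Set.iUnion_mono fun _ => Set.image_mono h)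

lemma subset_diffGen (d : K → K) (A : Set K) : A ⊆ ↑(DiffGen d A) := fun x hx =>
  Subfield.subset_closure (Set.mem_iUnion.2 ⟨0, ⟨x, hx, rfl⟩⟩)

lemma ipv_le {F E : Subfield K} (h : IsIPV d F E) : F ≤ E := by
  obtain ⟨n, T, h0, hlast, hstep⟩ := h
  have : ∀ i : Fin (n + 1), T 0 ≤ T i := by
    intro i
    induction i using Fin.induction with
    | zero => exact le_rfl
    | succ i ih => exact ih.trans (hstep i).1
  rw [← h0, ← hlast]; exact this _

lemma ipv_refl (d : K → K) (F : Subfield K) : IsIPV d F F :=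
  ⟨0, fun _ => F, rfl, rfl, fun i => i.elim0⟩

lemma pv_base_change {F E M B : Subfield K} (hconst : ∀ x : K, d x = 0 → x ∈ F)
    (hFB : F ≤ B) (hEB : E ≤ B) (h : IsPV d E M) : IsPV d B (B ⊔ M) := by
  obtain ⟨hEM, -, n, a, v, ha, hv, hsol, hli, hgen⟩ := h
  refine ⟨le_sup_left, fun x _ hx => hFB (hconst x hx), n, a, v,
    fun i => hEB (ha i), fun i => le_sup_right (α := Subfield K) (hv i),
    hsol, hli, sup_le ?_ ?_⟩
  · exact fun x hx => subset_diffGen d _ (Or.inl hx)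
  · exact hgen.trans (diffGen_mono d (Set.union_subset_union_left _ hEB))

lemma ipv_base_change {F N B : Subfield K} (hconst : ∀ x : K, d x = 0 → x ∈ F)
    (hFB : F ≤ B) (h : IsIPV d F N) : IsIPV d B (B ⊔ N) := by
  obtain ⟨n, T, h0, hlast, hstep⟩ := h
  refine ⟨n, fun i => B ⊔ T i, ?_, ?_, fun i => ?_⟩
  · show B ⊔ T 0 = B
    rw [h0]; exact sup_eq_left.2 hFB
  · show B ⊔ T (Fin.last n) = B ⊔ N
    rw [hlast]
  · have h' := pv_base_change (d := d) hconst (hFB.trans le_sup_left) le_sup_right (hstep i)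
    show IsPV d (B ⊔ T i.castSucc) (B ⊔ T i.succ)
    rwa [sup_assoc, sup_eq_right.2 (hstep i).1] at h' 

lemma ipv_trans {F M E : Subfield K} (h1 : IsIPV d F M) (h2 : IsIPV d M E) :
    IsIPV d F E := by
  obtain ⟨n, T1, hT10, hT1l, hT1s⟩ := h1
  obtain ⟨m, T2, hT20, hT2l, hT2s⟩ := h2
  set T : Fin (n + m + 1) → Subfield K := fun i => if h : (i : ℕ) < n + 1 then T1 ⟨i, h⟩
    else T2 ⟨(i : ℕ) - n, by omega⟩ with hT
  have hlt : ∀ (j : Fin (n + m + 1)) (h : (j : ℕ) < n + 1), T j = T1 ⟨(j : ℕ), h⟩ := by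
    intro j h; simp only [hT]; rw [dif_pos h]
  have hge : ∀ (j : Fin (n + m + 1)) (h : n ≤ (j : ℕ)),
      T j = T2 ⟨(j : ℕ) - n, by omega⟩ := by
    intro j h
    rcases eq_or_lt_of_le h with h' | h'
    · rw [hlt j (by omega)]
      have e1 : (⟨(j : ℕ), by omega⟩ : Fin (n + 1)) = Fin.last n := by
        ext; simp [Fin.last]; omega
      have e2 : (⟨(j : ℕ) - n, by omega⟩ : Fin (m + 1)) = 0 := by
        ext; simp; omega
      rw [e1, hT1l, e2, hT20]
    · simp only [hT]; rw [dif_neg (by omega)]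
  refine ⟨n + m, T, ?_, ?_, ?_⟩
  · rw [hlt 0 (by simp)]
    rw [← hT10]
    congr 1
  · rw [hge (Fin.last (n + m)) (by simp [Fin.last])]
    rw [← hT2l]
    congr 1
    apply Fin.ext
    simp [Fin.last]
  · intro i
    have hcs : ((i.castSucc : Fin (n + m + 1)) : ℕ) = (i : ℕ) := rfl
    have hsu : ((i.succ : Fin (n + m + 1)) : ℕ) = (i : ℕ) + 1 := rfl
    by_cases h1 : (i : ℕ) < n
    · rw [hlt i.castSucc (by omega), hlt i.succ (by omega)]
      have hs := hT1s ⟨(i : ℕ), h1⟩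
      convert hs using 2
      all_goals (apply Fin.ext; try simp only [Fin.val_succ, Fin.coe_castSucc]; try omega)
    · rw [hge i.castSucc (by omega), hge i.succ (by omega)]
      have hs := hT2s ⟨(i : ℕ) - n, by omega⟩
      convert hs using 2
      all_goals (apply Fin.ext; try simp only [Fin.val_succ, Fin.coe_castSucc]; try omega)

lemma ipv_sup {F M N : Subfield K} (hconst : ∀ x : K, d x = 0 → x ∈ F)
    (hM : IsIPV d F M) (hN : IsIPV d F N) : IsIPV d F (M ⊔ N) :=
  ipv_trans hM (ipv_base_change hconst (ipv_le hM) hN)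

end Aux

/-- a compositum of locally iterated Picard–Vessiot subextensions of `F`
inside a no-new-constants extension `K` of `F` is again LIPV over `F`. -/
theorem stmt_7 {K : Type*} [Field K] (d : K → K) (hd : IsDeriv d)
    (F : Subfield K) (hFst : DStable d F)
    (hconst : ∀ x : K, d x = 0 → x ∈ F)
    (I : Set (Subfield K)) (hI : ∀ E ∈ I, DStable d E ∧ IsLIPV d F E) :
    IsLIPV d F (F ⊔ sSup I) := by
  set E : Subfield K := F ⊔ sSup I with hE
  -- the union of all IPV subextensions contained in `E` is a subfield
  let U : Subfield K :=
    { carrier := {x | ∃ M : Subfield K, M ≤ E ∧ IsIPV d F M ∧ x ∈ M}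
      one_mem' := ⟨F, le_sup_left, ipv_refl d F, one_mem F⟩
      zero_mem' := ⟨F, le_sup_left, ipv_refl d F, zero_mem F⟩
      mul_mem' := by
        rintro x y ⟨M1, hM1, hI1, hx⟩ ⟨M2, hM2, hI2, hy⟩
        exact ⟨M1 ⊔ M2, sup_le hM1 hM2, ipv_sup hconst hI1 hI2,
          mul_mem (le_sup_left (α := Subfield K) hx) (le_sup_right (α := Subfield K) hy)⟩
      add_mem' := by
        rintro x y ⟨M1, hM1, hI1, hx⟩ ⟨M2, hM2, hI2, hy⟩
        exact ⟨M1 ⊔ M2, sup_le hM1 hM2, ipv_sup hconst hI1 hI2,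
          add_mem (le_sup_left (α := Subfield K) hx) (le_sup_right (α := Subfield K) hy)⟩
      neg_mem' := by
        rintro x ⟨M, hM, hIM, hx⟩
        exact ⟨M, hM, hIM, neg_mem hx⟩
      inv_mem' := by
        rintro x ⟨M, hM, hIM, hx⟩
        exact ⟨M, hM, hIM, inv_mem hx⟩ }
  have hEU : E ≤ U := by
    refine sup_le (fun x hx => ⟨F, le_sup_left, ipv_refl d F, hx⟩) (sSup_le ?_)
    intro A hA x hx
    obtain ⟨M, hME, hIM, hxM⟩ := (hI A hA).2.2 {x} (by simpa using hx)
    exact ⟨M, (hME.trans ((le_sSup hA).trans le_sup_right)), hIM, hxM (by simp)⟩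
  refine ⟨le_sup_left, fun X => ?_⟩
  -- induction on the finite set
  classical
  induction X using Finset.induction_on with
  | empty => exact fun _ => ⟨F, le_sup_left, ipv_refl d F, by simp⟩
  | @insert a X ha ih =>
    intro hX
    obtain ⟨M, hME, hIM, hXM⟩ := ih (by
      intro x hx; exact hX (by simp [hx]))
    have haE : a ∈ E := hX (by simp)
    obtain ⟨Ma, hMaE, hIMa, haMa⟩ := hEU haE
    refine ⟨Ma ⊔ M, sup_le hMaE hME, ipv_sup hconst hIMa hIM, ?_⟩
    intro x hx
    rcases Finset.mem_insert.1 (by exact_mod_cast hx) with rfl | hxX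
    · exact le_sup_left (α := Subfield K) haMa
    · exact le_sup_right (α := Subfield K) (hXM hxX)
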